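/- Let ξ* be a probability distribution and for a bounded measurable function h_tr with ‖s·h_tr‖_∞ ≤ 1/4, define the exponentially tilted distribution ξ_s(x) ∝ ξ*(x)·exp(s·h_tr(x)). Then the chi-squared divergence satisfies χ²(ξ_s ‖ ξ*) ≤ exp(4s‖h_tr‖_∞)·s²·E_{ξ*}[h_tr(X)²]. -/

import Mathlib

open MeasureTheory

lemma abs_exp_sub_one_le' (x : ℝ) : |Real.exp x - 1| ≤ |x| * Real.exp |x| := by
  rcases le_or_gt 0 x with hx | hx
  · have h0 : (0:ℝ) ≤ Real.exp x - 1 := by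
      have := Real.add_one_le_exp x; linarith
    rw [abs_of_nonneg hx, abs_of_nonneg h0]
    have h1 : 1 - x ≤ Real.exp (-x) := by
      have := Real.add_one_le_exp (-x); linarith
    have h2 : (1 - x) * Real.exp x ≤ 1 := by
      have := mul_le_mul_of_nonneg_right h1 (Real.exp_pos x).le
      rwa [← Real.exp_add, neg_add_cancel, Real.exp_zero] at this
    nlinarith [Real.exp_pos x]
  · have h0 : Real.exp x - 1 ≤ 0 := by
      have : Real.exp x ≤ Real.exp 0 := Real.exp_le_exp.mpr hx.le
      rw [Real.exp_zero] at this; linarith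
    rw [abs_of_neg hx, abs_of_nonpos h0]
    have h1 : x + 1 ≤ Real.exp x := Real.add_one_le_exp x
    have h2 : (1:ℝ) ≤ Real.exp (-x) := by
      rw [← Real.exp_zero]; exact Real.exp_le_exp.mpr (by linarith)
    nlinarith

/-- Chi-squared divergence bound for an exponentially tilted distribution: if
`‖s·h‖_∞ ≤ 1/4` (with `s > 0` and `|h| ≤ B`, `s·B ≤ 1/4`), then the tilted measure
`ξ_s ∝ ξ*·exp(s·h)` satisfies
`χ²(ξ_s ‖ ξ*) = Var_{ξ*}(exp(s·h)/Z_s) ≤ exp(4s·B)·s²·E_{ξ*}[h²]`. -/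
theorem tilted_chi_squared_bound
    {S : Type*} [MeasurableSpace S] (ξ : Measure S) [IsProbabilityMeasure ξ]
    (h : S → ℝ) (hmeas : Measurable h)
    (s B : ℝ) (hs : 0 < s) (hB : 0 ≤ B)
    (hbound : ∀ x, |h x| ≤ B) (hsB : s * B ≤ 1/4)
    (Z : ℝ) (hZ : Z = ∫ x, Real.exp (s * h x) ∂ξ) :
    ∫ x, (Real.exp (s * h x) / Z - 1) ^ 2 ∂ξ ≤
      Real.exp (4 * s * B) * s ^ 2 * ∫ x, h x ^ 2 ∂ξ := by
  set f : S → ℝ := fun x => Real.exp (s * h x) with hf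
  set C : ℝ := Real.exp (s * B) with hC
  have hCpos : 0 < C := Real.exp_pos _
  have hfmeas : Measurable f := (hmeas.const_mul s).exp
  have hfub : ∀ x, f x ≤ C := by
    intro x
    exact Real.exp_le_exp.mpr (by nlinarith [abs_le.mp (hbound x)])
  have hflb : ∀ x, Real.exp (-(s*B)) ≤ f x := by
    intro x
    exact Real.exp_le_exp.mpr (by nlinarith [abs_le.mp (hbound x)])
  have hfpos : ∀ x, 0 < f x := fun x => Real.exp_pos _
  have int_f : Integrable f ξ := by
    refine Integrable.mono' (integrable_const C) hfmeas.aestronglyMeasurable ?_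
    filter_upwards with x
    rw [Real.norm_eq_abs, abs_of_pos (hfpos x)]
    exact hfub x
  have int_sq : ∀ c : ℝ, Integrable (fun x => (f x - c)^2) ξ := by
    intro c
    refine Integrable.mono' (integrable_const ((C + |c|)^2))
      (((hfmeas.sub measurable_const).pow measurable_const).aestronglyMeasurable) ?_
    filter_upwards with x
    rw [Real.norm_eq_abs, abs_of_nonneg (sq_nonneg _)]
    have h1 : |f x - c| ≤ C + |c| := by
      have := abs_sub_abs_le_abs_sub (f x) c
      have h2 : |f x| ≤ C := by rw [abs_of_pos (hfpos x)]; exact hfub x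
      calc |f x - c| ≤ |f x| + |c| := abs_sub _ _
        _ ≤ C + |c| := by linarith
    calc (f x - c)^2 = |f x - c|^2 := (sq_abs _).symm
      _ ≤ (C + |c|)^2 := pow_le_pow_left₀ (abs_nonneg _) h1 2
  have int_h2 : Integrable (fun x => h x ^ 2) ξ := by
    refine Integrable.mono' (integrable_const (B^2))
      ((hmeas.pow measurable_const).aestronglyMeasurable) ?_
    filter_upwards with x
    rw [Real.norm_eq_abs, abs_of_nonneg (sq_nonneg _)]
    nlinarith [hbound x, abs_nonneg (h x), abs_le.mp (hbound x)]
  have hZlb : Real.exp (-(s*B)) ≤ Z := by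
    rw [hZ]
    calc Real.exp (-(s*B)) = ∫ _x, Real.exp (-(s*B)) ∂ξ := by simp
      _ ≤ ∫ x, f x ∂ξ := integral_mono (integrable_const _) int_f hflb
  have hZpos : 0 < Z := lt_of_lt_of_le (Real.exp_pos _) hZlb
  -- Step 1: rewrite LHS
  have step1 : ∫ x, (f x / Z - 1) ^ 2 ∂ξ = Z⁻¹^2 * ∫ x, (f x - Z)^2 ∂ξ := by
    rw [← integral_const_mul]
    congr 1
    funext x
    field_simp
  -- Step 2: variance minimization
  have key : ∫ x, ((f x - 1)^2 - (f x - Z)^2) ∂ξ = (Z - 1)^2 := by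
    have e : ∀ x, (f x - 1)^2 - (f x - Z)^2 = (2*(Z-1)) * f x - (Z-1)*(1+Z) := by
      intro x; ring
    simp_rw [e]
    rw [integral_sub (int_f.const_mul _) (integrable_const _), integral_const_mul,
      integral_const, probReal_univ, smul_eq_mul, one_mul, ← hZ]
    ring
  have step2 : ∫ x, (f x - Z)^2 ∂ξ ≤ ∫ x, (f x - 1)^2 ∂ξ := by
    have := integral_sub (int_sq 1) (int_sq Z)
    rw [key] at this
    nlinarith [sq_nonneg (Z - 1)]
  -- Step 3: pointwise bound on (f - 1)^2
  have step3 : ∫ x, (f x - 1)^2 ∂ξ ≤ C^2 * s^2 * ∫ x, h x ^ 2 ∂ξ := by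
    rw [← integral_const_mul]
    refine integral_mono (int_sq 1) (int_h2.const_mul _) ?_
    intro x
    have h1 : |f x - 1| ≤ |s * h x| * Real.exp |s * h x| := abs_exp_sub_one_le' _
    have h2 : Real.exp |s * h x| ≤ C := by
      refine Real.exp_le_exp.mpr ?_
      rw [abs_mul, abs_of_pos hs]
      nlinarith [hbound x]
    have h3 : |f x - 1| ≤ s * |h x| * C := by
      calc |f x - 1| ≤ |s * h x| * Real.exp |s * h x| := h1
        _ ≤ |s * h x| * C := by
            refine mul_le_mul_of_nonneg_left h2 (abs_nonneg _)
        _ = s * |h x| * C := by rw [abs_mul, abs_of_pos hs]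
    calc (f x - 1)^2 = |f x - 1|^2 := (sq_abs _).symm
      _ ≤ (s * |h x| * C)^2 := pow_le_pow_left₀ (abs_nonneg _) h3 2
      _ = C^2 * s^2 * h x ^2 := by rw [mul_pow, mul_pow, sq_abs]; ring
  -- Combine
  have hZinv : Z⁻¹ ≤ Real.exp (s*B) := by
    have := inv_anti₀ (Real.exp_pos (-(s*B))) hZlb
    rwa [Real.exp_neg, inv_inv] at this
  have hint_nonneg : 0 ≤ ∫ x, h x ^ 2 ∂ξ := integral_nonneg fun x => sq_nonneg _
  have hsq_nonneg : 0 ≤ ∫ x, (f x - Z)^2 ∂ξ := integral_nonneg fun x => sq_nonneg _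
  have hZinv2 : Z⁻¹^2 ≤ Real.exp (2*(s*B)) := by
    have : Real.exp (2*(s*B)) = Real.exp (s*B) * Real.exp (s*B) := by
      rw [← Real.exp_add]; ring_nf
    rw [this, sq]
    exact mul_le_mul hZinv hZinv (inv_nonneg.mpr hZpos.le) (Real.exp_pos _).le
  have hfinal : Real.exp (2*(s*B)) * (C^2 * s^2 * ∫ x, h x ^ 2 ∂ξ)
      = Real.exp (4*s*B) * s^2 * ∫ x, h x ^ 2 ∂ξ := by
    rw [hC, ← Real.exp_nat_mul]
    rw [show Real.exp (2*(s*B)) * (Real.exp (↑(2:ℕ) * (s*B)) * s^2 * ∫ x, h x ^2 ∂ξ)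
      = (Real.exp (2*(s*B)) * Real.exp (2*(s*B))) * s^2 * ∫ x, h x ^2 ∂ξ by push_cast; ring]
    rw [← Real.exp_add]
    ring_nf
  calc ∫ x, (f x / Z - 1) ^ 2 ∂ξ = Z⁻¹^2 * ∫ x, (f x - Z)^2 ∂ξ := step1
    _ ≤ Real.exp (2*(s*B)) * ∫ x, (f x - Z)^2 ∂ξ :=
        mul_le_mul_of_nonneg_right hZinv2 hsq_nonneg
    _ ≤ Real.exp (2*(s*B)) * ∫ x, (f x - 1)^2 ∂ξ :=
        mul_le_mul_of_nonneg_left step2 (Real.exp_pos _).le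
    _ ≤ Real.exp (2*(s*B)) * (C^2 * s^2 * ∫ x, h x ^ 2 ∂ξ) :=
        mul_le_mul_of_nonneg_left step3 (Real.exp_pos _).le
    _ = Real.exp (4*s*B) * s^2 * ∫ x, h x ^ 2 ∂ξ := hfinal
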